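/- No division, partial or complete, strictly Pareto dominates an envy-free complete connected division: if x is an envy-free complete connected division for n players, there is no connected division y (partial or complete) with v_i(y_i) > v_i(x_i) for all i ∈ [n]. -/

import Mathlib

open MeasureTheory Set
open scoped ENNReal

/-- A connected division of the cake `[0,1]` among `n` players: each player gets an
open interval, the intervals are pairwise disjoint and contained in `[0,1]`. -/
structure ConnDiv (n : ℕ) where
  pieces : Fin n → Set ℝ
  isInterval : ∀ i, ∃ a b : ℝ, pieces i = Set.Ioo a b
  subset : ∀ i, pieces i ⊆ Set.Icc (0:ℝ) 1
  disj : Pairwise fun i j => Disjoint (pieces i) (pieces j)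

/-- A connected division is complete if the closures of the pieces cover `[0,1]`. -/
def ConnDiv.Complete {n : ℕ} (d : ConnDiv n) : Prop :=
  Set.Icc (0:ℝ) 1 ⊆ ⋃ i, closure (d.pieces i)

/-- Envy-freeness: every player weakly prefers her own piece. -/
def EnvyFree {n : ℕ} (v : Fin n → Measure ℝ) (d : ConnDiv n) : Prop :=
  ∀ i j, v i (d.pieces j) ≤ v i (d.pieces i)

/-- Utilitarian welfare: sum of own-piece values. -/
noncomputable def util {n : ℕ} (v : Fin n → Measure ℝ) (d : ConnDiv n) : ℝ≥0∞ :=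
  ∑ i, v i (d.pieces i)

/-- Egalitarian welfare: minimum own-piece value. -/
noncomputable def egal {n : ℕ} (v : Fin n → Measure ℝ) (d : ConnDiv n) : ℝ≥0∞ :=
  ⨅ i, v i (d.pieces i)

/-- The uniform measure of total mass `m` on the interval `(a,b)`. -/
noncomputable def unifOn (a b m : ℝ) : Measure ℝ :=
  ENNReal.ofReal (m / (b - a)) • volume.restrict (Set.Ioo a b)

/-- No division, partial or complete, strictly Pareto dominates an envy-free
complete connected division. -/
theorem no_strict_pareto_domination (n : ℕ) (v : Fin n → Measure ℝ)
    (hprob : ∀ i, v i (Set.Icc (0:ℝ) 1) = 1)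
    (hna : ∀ i, ∀ x : ℝ, v i {x} = 0)
    (x : ConnDiv n) (hc : x.Complete) (hEF : EnvyFree v x) :
    ¬ ∃ y : ConnDiv n, ∀ i, v i (x.pieces i) < v i (y.pieces i) := by
  rintro ⟨y, hy⟩
  have key : ∀ i : Fin n, ∃ p : ℝ, p ∈ y.pieces i ∧ (0 < p ∧ p < 1) ∧
      ∃ k, p ∈ closure (x.pieces k) ∧ x.pieces k ⊆ Set.Iio p := by
    intro i
    obtain ⟨c, d, hcd⟩ := y.isInterval i
    have hvy : 0 < v i (y.pieces i) := lt_of_le_of_lt zero_le (hy i)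
    have hyne : (y.pieces i).Nonempty := by
      rcases Set.eq_empty_or_nonempty (y.pieces i) with h | h
      · rw [h] at hvy; simp at hvy
      · exact h
    -- y_i is not contained in the union of the pieces of x
    have hnot : ¬ y.pieces i ⊆ ⋃ k, x.pieces k := by
      intro hsub
      obtain ⟨q, hq⟩ := hyne
      obtain ⟨j, hj⟩ := Set.mem_iUnion.1 (hsub hq)
      have hpre : IsPreconnected (y.pieces i) := by rw [hcd]; exact isPreconnected_Ioo
      have hopen : IsOpen (x.pieces j) := by
        obtain ⟨a, b, hab⟩ := x.isInterval j; rw [hab]; exact isOpen_Ioo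
      have hopen2 : IsOpen (⋃ k, ⋃ (_ : k ≠ j), x.pieces k) := by
        refine isOpen_iUnion fun k => isOpen_iUnion fun _ => ?_
        obtain ⟨a, b, hab⟩ := x.isInterval k; rw [hab]; exact isOpen_Ioo
      have hdisj : Disjoint (x.pieces j) (⋃ k, ⋃ (_ : k ≠ j), x.pieces k) := by
        refine Set.disjoint_iUnion_right.2 fun k => Set.disjoint_iUnion_right.2 fun hk => ?_
        exact x.disj hk.symm
      have hcover : y.pieces i ⊆ x.pieces j ∪ ⋃ k, ⋃ (_ : k ≠ j), x.pieces k := by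
        intro t ht
        obtain ⟨k, hk⟩ := Set.mem_iUnion.1 (hsub ht)
        by_cases hkj : k = j
        · exact Or.inl (hkj ▸ hk)
        · exact Or.inr (Set.mem_iUnion.2 ⟨k, Set.mem_iUnion.2 ⟨hkj, hk⟩⟩)
      have hyj : y.pieces i ⊆ x.pieces j :=
        hpre.subset_left_of_subset_union hopen hopen2 hdisj hcover ⟨q, hq, hj⟩
      exact absurd (hy i) (not_lt.2 (le_trans (measure_mono hyj) (hEF i j)))
    obtain ⟨p, hpy, hpU⟩ := Set.not_subset.1 hnot
    -- p lies strictly inside (0,1)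
    have hcdne : c < d := by
      have := hpy; rw [hcd] at this; exact lt_trans this.1 this.2
    have hsub01 : Set.Icc c d ⊆ Set.Icc (0:ℝ) 1 := by
      have h1 : closure (Set.Ioo c d) ⊆ Set.Icc (0:ℝ) 1 :=
        closure_minimal (hcd ▸ y.subset i) isClosed_Icc
      rwa [closure_Ioo hcdne.ne] at h1
    have hc0 : (0:ℝ) ≤ c := (hsub01 ⟨le_refl c, hcdne.le⟩).1
    have hd1 : d ≤ 1 := (hsub01 ⟨hcdne.le, le_refl d⟩).2
    have hpcd : p ∈ Set.Ioo c d := hcd ▸ hpy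
    have hp0 : 0 < p := lt_of_le_of_lt hc0 hpcd.1
    have hp1 : p < 1 := lt_of_lt_of_le hpcd.2 hd1
    -- the interval (0,p) is covered by left-truncated closures
    have hcov : Set.Ioo (0:ℝ) p ⊆ ⋃ k, closure (x.pieces k ∩ Set.Iio p) := by
      intro q hq
      have hq01 : q ∈ Set.Icc (0:ℝ) 1 := ⟨hq.1.le, (lt_trans hq.2 hp1).le⟩
      obtain ⟨k, hk⟩ := Set.mem_iUnion.1 (hc hq01)
      obtain ⟨a, b, hab⟩ := x.isInterval k
      rw [hab] at hk
      have hab' : a < b := by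
        by_contra hle
        rw [Set.Ioo_eq_empty hle, closure_empty] at hk
        exact hk
      rw [closure_Ioo hab'.ne] at hk
      refine Set.mem_iUnion.2 ⟨k, ?_⟩
      rw [hab, Set.Ioo_inter_Iio]
      have hamin : a < min b p := lt_min hab' (lt_of_le_of_lt hk.1 hq.2)
      rw [closure_Ioo hamin.ne]
      exact ⟨hk.1, le_min hk.2 hq.2.le⟩
    have hclosed : IsClosed (⋃ k, closure (x.pieces k ∩ Set.Iio p)) :=
      isClosed_iUnion_of_finite fun k => isClosed_closure
    have hpin : p ∈ ⋃ k, closure (x.pieces k ∩ Set.Iio p) := by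
      have h1 : p ∈ closure (Set.Ioo (0:ℝ) p) := by
        rw [closure_Ioo hp0.ne]
        exact ⟨hp0.le, le_refl p⟩
      exact (closure_minimal hcov hclosed) h1
    obtain ⟨k, hk⟩ := Set.mem_iUnion.1 hpin
    obtain ⟨a, b, hab⟩ := x.isInterval k
    rw [hab, Set.Ioo_inter_Iio] at hk
    have hamin : a < min b p := by
      by_contra hle
      rw [Set.Ioo_eq_empty hle, closure_empty] at hk
      exact hk
    rw [closure_Ioo hamin.ne] at hk
    have hpb : p ≤ b := le_trans hk.2 (min_le_left _ _)
    have hap : a < p := lt_of_lt_of_le hamin (min_le_right _ _)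
    have hbp : b ≤ p := by
      by_contra hlt
      push_neg at hlt
      exact hpU (Set.mem_iUnion.2 ⟨k, by rw [hab]; exact ⟨hap, hlt⟩⟩)
    have hab' : a < b := lt_of_lt_of_le hamin (min_le_left _ _)
    refine ⟨p, hpy, ⟨hp0, hp1⟩, k, ?_, ?_⟩
    · rw [hab, closure_Ioo hab'.ne]
      exact ⟨hap.le, hpb⟩
    · rw [hab]
      intro t ht
      exact lt_of_lt_of_le ht.2 hbp
  choose p hpy hp01 g hpcl hplt using key
  have hginj : Function.Injective g := by
    intro i i' h
    have hle : ∀ a b : Fin n, g a = g b → p a ≤ p b := by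
      intro a b hab
      have h1 : closure (x.pieces (g a)) ⊆ Set.Iic (p b) := by
        rw [hab]
        calc closure (x.pieces (g b)) ⊆ closure (Set.Iio (p b)) := closure_mono (hplt b)
          _ = Set.Iic (p b) := closure_Iio _
      exact h1 (hpcl a)
    have hpp : p i = p i' := le_antisymm (hle i i' h) (hle i' i h.symm)
    by_contra hne
    exact Set.disjoint_left.1 (y.disj hne) (hpy i) (hpp ▸ hpy i')
  obtain ⟨j0, hj0⟩ := Set.mem_iUnion.1 (hc (Set.right_mem_Icc.2 zero_le_one))
  obtain ⟨i, hi⟩ := (Finite.injective_iff_surjective.1 hginj) j0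
  have h1le : (1:ℝ) ≤ p i := by
    have h1 : closure (x.pieces (g i)) ⊆ Set.Iic (p i) := by
      calc closure (x.pieces (g i)) ⊆ closure (Set.Iio (p i)) := closure_mono (hplt i)
        _ = Set.Iic (p i) := closure_Iio _
    exact h1 (hi ▸ hj0)
  exact absurd (hp01 i).2 (not_lt.2 h1le)
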